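/- Let ‖·‖_K, ‖·‖_L be norms on ℝⁿ with ‖·‖_K ≤ ‖·‖_L ≤ λ‖·‖_K (λ ≥ 1), let u : [0,∞) → [0,∞) be Lipschitz with u(0)=0, define U(x) = (u(‖x‖_L)/‖x‖_L)·x for x ≠ 0, and let μ be a probability measure on ℝⁿ. Let m_L be a median of ‖·‖_L and m a median of u(‖·‖_L), both with respect to μ, and set δ = ε/(7 m_L ‖u‖_Lip) for ε > 0. If x, y ∈ ℝⁿ \ {0} satisfy ‖x − y‖_K ≤ δ m_L/λ, |‖y‖_L − m_L| < δ m_L, and |u(‖y‖_L) − m| < δ m, then ‖U(x) − U(y)‖_L ≤ 7δ m_L ‖u‖_Lip = ε. -/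

import Mathlib

open MeasureTheory Metric Set

/-- The `ε`-expansion of a set with respect to a distance function `d`. -/
def expandBy {X : Type*} (d : X → X → ℝ) (A : Set X) (ε : ℝ) : Set X :=
  {x | ∃ a ∈ A, d x a ≤ ε}

/-- The concentration function of a metric probability space, where the
metric is given by the distance function `d`. -/
noncomputable def concFn {X : Type*} [MeasurableSpace X] (d : X → X → ℝ)
    (μ : Measure X) (ε : ℝ) : ℝ :=
  sSup {r | ∃ A : Set X, MeasurableSet A ∧ (1 : ℝ)/2 ≤ (μ A).toReal ∧
    r = 1 - (μ (expandBy d A ε)).toReal}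

/-- `m` is a median of `f` with respect to `μ`. -/
def IsMedian {X : Type*} [MeasurableSpace X] (μ : Measure X) (f : X → ℝ) (m : ℝ) : Prop :=
  (1 : ℝ)/2 ≤ (μ {x | f x ≤ m}).toReal ∧ (1 : ℝ)/2 ≤ (μ {x | m ≤ f x}).toReal

theorem stmt13 {n : ℕ} (nK nL : Seminorm ℝ (Fin n → ℝ))
    (hLdef : ∀ x, nL x = 0 → x = 0)
    (lam : ℝ) (hlam : 1 ≤ lam)
    (h1 : ∀ x, nK x ≤ nL x) (h2 : ∀ x, nL x ≤ lam * nK x)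
    (u : ℝ → ℝ) (Lu : ℝ) (hLupos : 0 < Lu) (hu0 : u 0 = 0)
    (hunn : ∀ t, 0 ≤ t → 0 ≤ u t)
    (hulip : ∀ s t, 0 ≤ s → 0 ≤ t → |u s - u t| ≤ Lu * |s - t|)
    (μ : Measure (Fin n → ℝ)) [IsProbabilityMeasure μ]
    (mL m : ℝ) (hmL : IsMedian μ (fun x => nL x) mL)
    (hm : IsMedian μ (fun x => u (nL x)) m)
    (ε δ : ℝ) (hε : 0 < ε) (hδ : δ = ε / (7 * mL * Lu))
    (x y : Fin n → ℝ) (hx : x ≠ 0) (hy : y ≠ 0)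
    (hxy : nK (x - y) ≤ δ * mL / lam)
    (hyL : |nL y - mL| < δ * mL)
    (hyu : |u (nL y) - m| < δ * m) :
    nL ((u (nL x) / nL x) • x - (u (nL y) / nL y) • y) ≤ ε := by
  obtain ⟨hmL1, _⟩ := hmL
  have hmLnn : 0 ≤ mL := by
    by_contra h
    push_neg at h
    have he : {z : Fin n → ℝ | nL z ≤ mL} = ∅ := by
      ext z
      simp only [Set.mem_setOf_eq, Set.mem_empty_iff_false, iff_false, not_le]
      exact lt_of_lt_of_le h (apply_nonneg nL z)
    simp only at hmL1
    rw [he] at hmL1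
    simp at hmL1
    linarith
  have hδmL : 0 < δ * mL := lt_of_le_of_lt (abs_nonneg _) hyL
  have hmLpos : 0 < mL := by
    rcases hmLnn.lt_or_eq with h | h
    · exact h
    · exfalso; rw [← h, mul_zero] at hδmL; exact lt_irrefl 0 hδmL
  have hδpos : 0 < δ := by nlinarith
  have ha : 0 < nL x := lt_of_le_of_ne (apply_nonneg nL x) (fun h => hx (hLdef x h.symm))
  have hb : 0 < nL y := lt_of_le_of_ne (apply_nonneg nL y) (fun h => hy (hLdef y h.symm))
  set a := nL x with hA
  set b := nL y with hB
  have hε' : ε = 7 * mL * Lu * δ := by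
    rw [hδ]; field_simp
  have hua : 0 ≤ u a := hunn a ha.le
  have hub : 0 ≤ u b := hunn b hb.le
  have huaLe : u a ≤ Lu * a := by
    have h := hulip a 0 ha.le le_rfl
    rw [hu0, sub_zero, sub_zero, abs_of_nonneg hua, abs_of_nonneg ha.le] at h
    exact h
  have hnxy : nL (x - y) ≤ δ * mL := by
    calc nL (x - y) ≤ lam * nK (x - y) := h2 _
      _ ≤ lam * (δ * mL / lam) := by
          exact mul_le_mul_of_nonneg_left hxy (by linarith)
      _ = δ * mL := by field_simp
  have habs : |a - b| ≤ δ * mL := by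
    have hx1 : a ≤ nL (x - y) + b := by
      have := map_add_le_add nL (x - y) y
      rwa [sub_add_cancel] at this
    have hy1 : b ≤ nL (x - y) + a := by
      have := map_add_le_add nL (y - x) x
      rw [sub_add_cancel, map_sub_rev] at this
      exact this
    rw [abs_sub_le_iff]
    constructor <;> linarith
  have key : nL ((u a / a) • x - (u b / b) • y)
      ≤ |u a / a| * nL (x - y) + |u a / a - u b / b| * b := by
    have heq : (u a / a) • x - (u b / b) • y
        = (u a / a) • (x - y) + (u a / a - u b / b) • y := by
      rw [smul_sub, sub_smul]; abel
    calc nL ((u a / a) • x - (u b / b) • y)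
        ≤ nL ((u a / a) • (x - y)) + nL ((u a / a - u b / b) • y) := by
          rw [heq]; exact map_add_le_add nL _ _
      _ = |u a / a| * nL (x - y) + |u a / a - u b / b| * b := by
          rw [map_smul_eq_mul, map_smul_eq_mul, Real.norm_eq_abs, Real.norm_eq_abs]
  have hc1 : |u a / a| ≤ Lu := by
    rw [abs_of_nonneg (div_nonneg hua ha.le)]
    exact (div_le_iff₀ ha).mpr (by linarith)
  have huab : |u a - u b| ≤ Lu * |a - b| := hulip a b ha.le hb.le
  have term2 : |u a / a - u b / b| * b ≤ 2 * Lu * |a - b| := by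
    have hbne : b ≠ 0 := hb.ne'
    have hane : a ≠ 0 := ha.ne'
    have e0 : (u a / a - u b / b) * b = u a * (b / a) - u b := by
      field_simp
    have e1 : |u a / a - u b / b| * b = |u a * (b / a) - u b| := by
      rw [← e0, abs_mul, abs_of_nonneg hb.le]
    rw [e1]
    have e2 : |u a * (b / a) - u b| ≤ |u a * (b / a) - u a| + |u a - u b| := by
      have := abs_sub_le (u a * (b / a)) (u a) (u b)
      linarith
    have e3 : |u a * (b / a) - u a| ≤ Lu * |a - b| := by
      have : u a * (b / a) - u a = (u a / a) * (b - a) := by field_simp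
      have hc1n : u a / a ≤ Lu := (div_le_iff₀ ha).mpr (by linarith)
      rw [this, abs_mul, abs_of_nonneg (div_nonneg hua ha.le), abs_sub_comm]
      exact mul_le_mul_of_nonneg_right hc1n (abs_nonneg _)
    linarith
  have hnxynn : 0 ≤ nL (x - y) := apply_nonneg nL _
  calc nL ((u a / a) • x - (u b / b) • y)
      ≤ |u a / a| * nL (x - y) + |u a / a - u b / b| * b := key
    _ ≤ Lu * (δ * mL) + 2 * Lu * (δ * mL) := by
        have t1 : |u a / a| * nL (x - y) ≤ Lu * (δ * mL) := by
          apply mul_le_mul hc1 hnxy hnxynn hLupos.le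
        have t2 : |u a / a - u b / b| * b ≤ 2 * Lu * (δ * mL) := by
          refine term2.trans ?_
          exact mul_le_mul_of_nonneg_left habs (by linarith)
        linarith
    _ ≤ ε := by rw [hε']; nlinarith
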